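/- (Theorem: linear coding over characteristic 2 is suboptimal for I2) Let F be a field of characteristic 2 and t,r positive integers. If an encoder matrix H ∈ F^{r×26t} with blocks H_1,…,H_26 ∈ F^{r×t} satisfies the decoding condition rank H_{{i}∪B_i} = rank H_{B_i} + t for every user i ∈ {1,…,26} of the instance I2, then r > 6t. Hence no linear index code over F of broadcast rate 6 exists for I2. -/

import Mathlib

open Matrix

/-- The rank of the `r × |L|t` matrix formed by horizontally concatenating the
blocks `H l`, `l ∈ L`, of the block encoder matrix `H = [H_1 | ⋯ | H_m]`. -/
noncomputable def blockRank {F : Type} [Field F] {m r t : ℕ}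
    (H : Fin m → Matrix (Fin r) (Fin t) F) (L : Finset (Fin m)) : ℕ :=
  Matrix.rank (Matrix.of fun (k : Fin r) (p : {l // l ∈ L} × Fin t) => H p.1.1 k p.2)

/-- Interfering sets of the 26-user instance `I2` (0-based indexing:
user `i : Fin 26` corresponds to user `i+1` of the paper). -/
def I2interf : Fin 26 → Finset (Fin 26) :=
  ![{1, 2, 4, 10, 11, 12, 14, 21, 22, 23, 24, 25},
    {0, 2, 5, 10, 11, 12, 15, 20, 21, 23, 24, 25},
    {0, 1, 3, 10, 11, 12, 13, 20, 21, 22, 23, 25},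
    {4, 5, 13, 14, 15},
    {3, 5, 13, 14, 15},
    {3, 4, 13, 14, 15},
    {16},
    {0, 4, 6, 10, 14, 16, 17},
    {1, 5, 6, 11, 15, 16, 18},
    {2, 3, 6, 12, 13, 16, 19},
    {0, 1, 2, 4, 11, 12, 14, 20, 22, 23, 24, 25},
    {0, 1, 2, 5, 10, 12, 15, 20, 21, 22, 24, 25},
    {0, 1, 2, 3, 10, 11, 13, 20, 21, 22, 23, 24},
    {3}, {4}, {5}, {6},
    {0, 4, 6, 7, 10, 14, 16},
    {1, 5, 6, 8, 11, 15, 16},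
    {2, 3, 6, 9, 12, 13, 16},
    {3, 5, 13, 15, 21},
    {3, 5, 13, 15, 20},
    {3, 4, 13, 14, 23},
    {3, 4, 13, 14, 22},
    {4, 5, 14, 15, 25},
    {4, 5, 14, 15, 24}]

open Submodule Module

/-- `blockRank` equals the dimension of the sup of the column spaces of the blocks. -/
lemma blockRank_eq_finrank_sup {F : Type} [Field F] {m r t : ℕ}
    (H : Fin m → Matrix (Fin r) (Fin t) F) (L : Finset (Fin m)) :
    blockRank H L
      = finrank F ↥(L.sup fun l => LinearMap.range (H l).mulVecLin) := by
  set M : Matrix (Fin r) ({l // l ∈ L} × Fin t) F :=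
    Matrix.of fun (k : Fin r) (p : {l // l ∈ L} × Fin t) => H p.1.1 k p.2 with hM
  have key : ∀ v : {l // l ∈ L} × Fin t → F,
      M.mulVec v = ∑ l : {l // l ∈ L}, (H l.1).mulVec (fun j => v (l, j)) := by
    intro v
    funext k
    simp only [Matrix.mulVec, dotProduct, Finset.sum_apply,
      Fintype.sum_prod_type]
    rfl
  have hrange : LinearMap.range M.mulVecLin
      = L.sup fun l => LinearMap.range (H l).mulVecLin := by
    apply le_antisymm
    · rintro x ⟨v, rfl⟩
      rw [Matrix.mulVecLin_apply, key]
      refine Submodule.sum_mem _ fun l _ => ?_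
      exact Finset.le_sup (f := fun l => LinearMap.range (H l).mulVecLin) l.2 ⟨_, rfl⟩
    · refine Finset.sup_le fun l hl => ?_
      rintro x ⟨w, rfl⟩
      refine ⟨fun p => if p.1 = (⟨l, hl⟩ : {l // l ∈ L}) then w p.2 else 0, ?_⟩
      rw [Matrix.mulVecLin_apply, key, Matrix.mulVecLin_apply]
      rw [Fintype.sum_eq_single (⟨l, hl⟩ : {l // l ∈ L})]
      · simp
      · intro l' hl'
        have hz : (fun j => if l' = (⟨l, hl⟩ : {l // l ∈ L}) then w j else 0)
            = (0 : Fin t → F) := by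
          funext j; simp [hl']
        rw [hz, Matrix.mulVec_zero]
  unfold blockRank Matrix.rank
  rw [← hM, hrange]

/-- The basic "peeling" step: if `L ⊆ B_i` then `C i` is independent of the span of
the `C l`, `l ∈ L`, and contributes exactly `t` to the dimension. -/
lemma peel_aux {F : Type} [Field F] {n r t : ℕ} (C : Fin n → Submodule F (Fin r → F))
    (Bi : Finset (Fin n)) (i : Fin n)
    (hCi : finrank F ↥(C i) ≤ t)
    (hd : finrank F ↥(C i ⊔ Bi.sup C) = finrank F ↥(Bi.sup C) + t)
    {L : Finset (Fin n)} (hL : L ⊆ Bi) :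
    finrank F ↥(C i ⊔ L.sup C) = t + finrank F ↥(L.sup C) := by
  have hAB : L.sup C ≤ Bi.sup C := Finset.sup_mono hL
  have e1 := Submodule.finrank_sup_add_finrank_inf_eq (C i) (L.sup C)
  have e2 := Submodule.finrank_sup_add_finrank_inf_eq (C i ⊔ L.sup C) (Bi.sup C)
  have hsup : (C i ⊔ L.sup C) ⊔ Bi.sup C = C i ⊔ Bi.sup C := by
    rw [sup_assoc, sup_eq_right.mpr hAB]
  rw [hsup, hd] at e2
  have hinf : finrank F ↥(L.sup C) ≤ finrank F ↥((C i ⊔ L.sup C) ⊓ Bi.sup C) :=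
    Submodule.finrank_mono (le_inf le_sup_right hAB)
  omega

set_option maxHeartbeats 2000000 in
set_option synthInstance.maxHeartbeats 1000000 in
/-- Main abstract argument for the instance `I2`. -/
lemma I2aux {F : Type} [Field F] (hF : ringChar F = 2) (t r : ℕ) (ht : 0 < t)
    (C : Fin 26 → Submodule F (Fin r → F))
    (hC : ∀ i, finrank F ↥(C i) ≤ t)
    (hd : ∀ i, finrank F ↥(C i ⊔ (I2interf i).sup C)
      = finrank F ↥((I2interf i).sup C) + t) :
    6 * t < r := by
  by_contra hcon
  push_neg at hcon
  -- hcon : r ≤ 6 * t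
  have step : ∀ (i : Fin 26) (L : Finset (Fin 26)), L ⊆ I2interf i →
      finrank F ↥((insert i L).sup C) = t + finrank F ↥(L.sup C) := by
    intro i L hL
    rw [Finset.sup_insert]
    exact peel_aux C (I2interf i) i (hC i) (hd i) hL
  have dsing : ∀ i : Fin 26, finrank F ↥(({i} : Finset (Fin 26)).sup C) = t := by
    intro i
    have h1 := step i ∅ (Finset.empty_subset _)
    rw [Finset.sup_empty, finrank_bot, add_zero] at h1
    have hs : (insert i ∅ : Finset (Fin 26)) = {i} := by simp
    rw [hs] at h1
    exact h1
  -- dimensions of the seven "pair" spaces X_k and of W3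
  have dX1 : finrank F ↥(({0,10} : Finset (Fin 26)).sup C) = 2 * t := by
    rw [step 0 {10} (by decide), dsing 10]; ring
  have dX2 : finrank F ↥(({1,11} : Finset (Fin 26)).sup C) = 2 * t := by
    rw [step 1 {11} (by decide), dsing 11]; ring
  have dX3 : finrank F ↥(({2,12} : Finset (Fin 26)).sup C) = 2 * t := by
    rw [step 2 {12} (by decide), dsing 12]; ring
  have dX4 : finrank F ↥(({3,13} : Finset (Fin 26)).sup C) = 2 * t := by
    rw [step 3 {13} (by decide), dsing 13]; ring
  have dX5 : finrank F ↥(({4,14} : Finset (Fin 26)).sup C) = 2 * t := by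
    rw [step 4 {14} (by decide), dsing 14]; ring
  have dX6 : finrank F ↥(({5,15} : Finset (Fin 26)).sup C) = 2 * t := by
    rw [step 5 {15} (by decide), dsing 15]; ring
  have dX7 : finrank F ↥(({6,16} : Finset (Fin 26)).sup C) = 2 * t := by
    rw [step 6 {16} (by decide), dsing 16]; ring
  have dW3 : finrank F ↥(({24,25} : Finset (Fin 26)).sup C) = 2 * t := by
    rw [step 24 {25} (by decide), dsing 25]; ring
  -- dimensions of the sups of two / three pair spaces
  have d23 : finrank F ↥(({1,2,11,12} : Finset (Fin 26)).sup C) = 4 * t := by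
    rw [step 1 {2,11,12} (by decide), step 2 {11,12} (by decide),
      step 11 {12} (by decide), dsing 12]; ring
  have d13 : finrank F ↥(({0,2,10,12} : Finset (Fin 26)).sup C) = 4 * t := by
    rw [step 0 {2,10,12} (by decide), step 2 {10,12} (by decide),
      step 10 {12} (by decide), dsing 12]; ring
  have d12 : finrank F ↥(({0,1,10,11} : Finset (Fin 26)).sup C) = 4 * t := by
    rw [step 0 {1,10,11} (by decide), step 1 {10,11} (by decide),
      step 10 {11} (by decide), dsing 11]; ring
  have d6 : finrank F ↥(({0,1,2,10,11,12} : Finset (Fin 26)).sup C) = 6 * t := by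
    rw [step 0 {1,2,10,11,12} (by decide), step 1 {2,10,11,12} (by decide),
      step 2 {10,11,12} (by decide), step 10 {11,12} (by decide),
      step 11 {12} (by decide), dsing 12]; ring
  have hrankV : finrank F (Fin r → F) = r := by
    rw [Module.finrank_pi, Fintype.card_fin]
  have dle : ∀ L : Finset (Fin 26), finrank F ↥(L.sup C) ≤ r := by
    intro L
    have := Submodule.finrank_le (L.sup C)
    rw [hrankV] at this
    exact this
  have hr6 : r = 6 * t := by
    have h1 := dle {0,1,2,10,11,12}
    omega
  -- helpers
  have hU : ∀ A B : Finset (Fin 26), A.sup C ⊔ B.sup C = (A ∪ B).sup C :=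
    fun A B => (Finset.sup_union).symm
  have infbot : ∀ p q : Submodule F (Fin r → F),
      finrank F ↥(p ⊔ q) = finrank F ↥p + finrank F ↥q → p ⊓ q = ⊥ := by
    intro p q h
    have h2 := Submodule.finrank_sup_add_finrank_inf_eq p q
    rw [h] at h2
    have h3 : finrank F ↥(p ⊓ q) = 0 := by omega
    exact Submodule.finrank_eq_zero.mp h3
  have dimsup : ∀ p q : Submodule F (Fin r → F), p ⊓ q = ⊥ →
      finrank F ↥(p ⊔ q) = finrank F ↥p + finrank F ↥q := by
    intro p q h
    have h2 := Submodule.finrank_sup_add_finrank_inf_eq p q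
    rw [h, finrank_bot] at h2
    omega
  -- the three basic intersection facts
  have hX1_23 : ({0,10} : Finset (Fin 26)).sup C ⊓ ({1,2,11,12} : Finset (Fin 26)).sup C = ⊥ := by
    apply infbot
    have e : ({0,10} : Finset (Fin 26)) ∪ {1,2,11,12} = {0,1,2,10,11,12} := by decide
    rw [hU, e, d6, dX1, d23]; ring
  have hX23 : ({1,11} : Finset (Fin 26)).sup C ⊓ ({2,12} : Finset (Fin 26)).sup C = ⊥ := by
    apply infbot
    have e : ({1,11} : Finset (Fin 26)) ∪ {2,12} = {1,2,11,12} := by decide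
    rw [hU, e, d23, dX2, dX3]; ring
  have hX2_13 : ({1,11} : Finset (Fin 26)).sup C ⊓ ({0,2,10,12} : Finset (Fin 26)).sup C = ⊥ := by
    apply infbot
    have e : ({1,11} : Finset (Fin 26)) ∪ {0,2,10,12} = {0,1,2,10,11,12} := by decide
    rw [hU, e, d6, dX2, d13]; ring
  have hX3_12 : ({2,12} : Finset (Fin 26)).sup C ⊓ ({0,1,10,11} : Finset (Fin 26)).sup C = ⊥ := by
    apply infbot
    have e : ({2,12} : Finset (Fin 26)) ∪ {0,1,10,11} = {0,1,2,10,11,12} := by decide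
    rw [hU, e, d6, dX3, d12]; ring
  -- characteristic two
  haveI hchar : CharP F 2 := hF ▸ ringChar.charP F
  have char2 : ∀ x : Fin r → F, x + x = 0 := by
    intro x
    funext k
    show x k + x k = 0
    exact CharTwo.add_self_eq_zero (x k)
  -- uniqueness of decompositions along X1 ⊕ X2 ⊕ X3
  have e1122 : ({1,11} : Finset (Fin 26)) ∪ {2,12} = {1,2,11,12} := by decide
  have uniq : ∀ a b c : Fin r → F,
      a ∈ ({0,10} : Finset (Fin 26)).sup C → b ∈ ({1,11} : Finset (Fin 26)).sup C →
      c ∈ ({2,12} : Finset (Fin 26)).sup C → a + b + c = 0 →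
      a = 0 ∧ b = 0 ∧ c = 0 := by
    intro a b c ha hb hc h0
    have hbc : b + c ∈ ({1,2,11,12} : Finset (Fin 26)).sup C := by
      rw [← e1122, ← hU]
      exact Submodule.add_mem_sup hb hc
    have ha0 : a = 0 := by
      have hneg : a = -(b + c) := by
        have h1 : a + (b + c) = 0 := by rw [← add_assoc]; exact h0
        exact eq_neg_of_add_eq_zero_left h1
      have hmem : a ∈ ({0,10} : Finset (Fin 26)).sup C ⊓ ({1,2,11,12} : Finset (Fin 26)).sup C :=
        ⟨ha, by rw [hneg]; exact neg_mem hbc⟩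
      rw [hX1_23] at hmem
      exact hmem
    have hbc0 : b + c = 0 := by
      rw [ha0, zero_add] at h0; exact h0
    have hb0 : b = 0 := by
      have hneg : b = -c := eq_neg_of_add_eq_zero_left hbc0
      have hmem : b ∈ ({1,11} : Finset (Fin 26)).sup C ⊓ ({2,12} : Finset (Fin 26)).sup C :=
        ⟨hb, by rw [hneg]; exact neg_mem hc⟩
      rw [hX23] at hmem
      exact hmem
    have hc0 : c = 0 := by rw [hb0, zero_add] at hbc0; exact hbc0
    exact ⟨ha0, hb0, hc0⟩
  -- pair (0,10): C4,C14 (i.e. X5) live inside X2 ⊔ X3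
  have p1 : finrank F ↥((insert 0 (insert 10 ({1,2,4,11,12,14,24,25} : Finset (Fin 26)))).sup C)
      = t + (t + finrank F ↥(({1,2,4,11,12,14,24,25} : Finset (Fin 26)).sup C)) := by
    rw [step 0 _ (by decide), step 10 _ (by decide)]
  have hL1le : finrank F ↥(({1,2,4,11,12,14,24,25} : Finset (Fin 26)).sup C) ≤ 4 * t := by
    have h1 := dle (insert 0 (insert 10 ({1,2,4,11,12,14,24,25} : Finset (Fin 26))))
    omega
  have e23L : ({1,2,11,12} : Finset (Fin 26)).sup C
      = ({1,2,4,11,12,14,24,25} : Finset (Fin 26)).sup C := by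
    apply Submodule.eq_of_le_of_finrank_le (Finset.sup_mono (by decide))
    rw [d23]; exact hL1le
  have hX5sub : ({4,14} : Finset (Fin 26)).sup C ≤ ({1,2,11,12} : Finset (Fin 26)).sup C := by
    rw [e23L]; exact Finset.sup_mono (by decide)
  have hW3sub23 : ({24,25} : Finset (Fin 26)).sup C ≤ ({1,2,11,12} : Finset (Fin 26)).sup C := by
    rw [e23L]; exact Finset.sup_mono (by decide)
  -- pair (1,11): X6 lives inside X1 ⊔ X3
  have p2 : finrank F ↥((insert 1 (insert 11 ({0,2,5,10,12,15,24,25} : Finset (Fin 26)))).sup C)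
      = t + (t + finrank F ↥(({0,2,5,10,12,15,24,25} : Finset (Fin 26)).sup C)) := by
    rw [step 1 _ (by decide), step 11 _ (by decide)]
  have hL2le : finrank F ↥(({0,2,5,10,12,15,24,25} : Finset (Fin 26)).sup C) ≤ 4 * t := by
    have h1 := dle (insert 1 (insert 11 ({0,2,5,10,12,15,24,25} : Finset (Fin 26))))
    omega
  have e13L : ({0,2,10,12} : Finset (Fin 26)).sup C
      = ({0,2,5,10,12,15,24,25} : Finset (Fin 26)).sup C := by
    apply Submodule.eq_of_le_of_finrank_le (Finset.sup_mono (by decide))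
    rw [d13]; exact hL2le
  have hX6sub : ({5,15} : Finset (Fin 26)).sup C ≤ ({0,2,10,12} : Finset (Fin 26)).sup C := by
    rw [e13L]; exact Finset.sup_mono (by decide)
  have hW3sub13 : ({24,25} : Finset (Fin 26)).sup C ≤ ({0,2,10,12} : Finset (Fin 26)).sup C := by
    rw [e13L]; exact Finset.sup_mono (by decide)
  -- pair (2,12): X4 lives inside X1 ⊔ X2
  have p3 : finrank F ↥((insert 2 (insert 12 ({0,1,3,10,11,13} : Finset (Fin 26)))).sup C)
      = t + (t + finrank F ↥(({0,1,3,10,11,13} : Finset (Fin 26)).sup C)) := by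
    rw [step 2 _ (by decide), step 12 _ (by decide)]
  have hL3le : finrank F ↥(({0,1,3,10,11,13} : Finset (Fin 26)).sup C) ≤ 4 * t := by
    have h1 := dle (insert 2 (insert 12 ({0,1,3,10,11,13} : Finset (Fin 26))))
    omega
  have e12L : ({0,1,10,11} : Finset (Fin 26)).sup C
      = ({0,1,3,10,11,13} : Finset (Fin 26)).sup C := by
    apply Submodule.eq_of_le_of_finrank_le (Finset.sup_mono (by decide))
    rw [d12]; exact hL3le
  have hX4sub : ({3,13} : Finset (Fin 26)).sup C ≤ ({0,1,10,11} : Finset (Fin 26)).sup C := by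
    rw [e12L]; exact Finset.sup_mono (by decide)
  -- W3 = X3
  have hsup1323 : finrank F ↥(({0,2,10,12} : Finset (Fin 26)).sup C
      ⊔ ({1,2,11,12} : Finset (Fin 26)).sup C) = 6 * t := by
    have e : ({0,2,10,12} : Finset (Fin 26)) ∪ {1,2,11,12} = {0,1,2,10,11,12} := by decide
    rw [hU, e, d6]
  have hinf1323 : finrank F ↥(({0,2,10,12} : Finset (Fin 26)).sup C
      ⊓ ({1,2,11,12} : Finset (Fin 26)).sup C) = 2 * t := by
    have h2 := Submodule.finrank_sup_add_finrank_inf_eq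
      (({0,2,10,12} : Finset (Fin 26)).sup C) (({1,2,11,12} : Finset (Fin 26)).sup C)
    rw [hsup1323, d13, d23] at h2
    omega
  have eX3inf : ({2,12} : Finset (Fin 26)).sup C
      = ({0,2,10,12} : Finset (Fin 26)).sup C ⊓ ({1,2,11,12} : Finset (Fin 26)).sup C := by
    apply Submodule.eq_of_le_of_finrank_le
      (le_inf (Finset.sup_mono (by decide)) (Finset.sup_mono (by decide)))
    rw [hinf1323, dX3]
  have hW3X3 : ({24,25} : Finset (Fin 26)).sup C ≤ ({2,12} : Finset (Fin 26)).sup C := by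
    rw [eX3inf]; exact le_inf hW3sub13 hW3sub23
  have hX3W3 : ({24,25} : Finset (Fin 26)).sup C = ({2,12} : Finset (Fin 26)).sup C :=
    Submodule.eq_of_le_of_finrank_le hW3X3 (by rw [dX3, dW3])
  -- X3 ⊓ Y = ⊥ , where Y = X5 ⊔ X6 = {4,5,14,15}.sup C
  have dchainW : finrank F ↥((insert 24 (insert 25 ({4,5,14,15} : Finset (Fin 26)))).sup C)
      = t + (t + finrank F ↥(({4,5,14,15} : Finset (Fin 26)).sup C)) := by
    rw [step 24 _ (by decide), step 25 _ (by decide)]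
  have hX3Y : ({2,12} : Finset (Fin 26)).sup C ⊓ ({4,5,14,15} : Finset (Fin 26)).sup C = ⊥ := by
    rw [← hX3W3]
    apply infbot
    have e : ({24,25} : Finset (Fin 26)) ∪ {4,5,14,15}
        = insert 24 (insert 25 ({4,5,14,15} : Finset (Fin 26))) := by decide
    rw [hU, e, dchainW, dW3]; ring
  have hX5X3 : ({4,14} : Finset (Fin 26)).sup C ⊓ ({2,12} : Finset (Fin 26)).sup C = ⊥ := by
    have h1 : ({4,14} : Finset (Fin 26)).sup C ⊓ ({2,12} : Finset (Fin 26)).sup C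
        ≤ ({2,12} : Finset (Fin 26)).sup C ⊓ ({4,5,14,15} : Finset (Fin 26)).sup C :=
      le_inf inf_le_right (le_trans inf_le_left (Finset.sup_mono (by decide)))
    rw [hX3Y] at h1
    exact le_bot_iff.mp h1
  -- pairwise independence of X1,X5 / X2,X6 / X3,X4 and sup dimensions
  have hX1X5 : ({0,10} : Finset (Fin 26)).sup C ⊓ ({4,14} : Finset (Fin 26)).sup C = ⊥ := by
    have h1 := inf_le_inf_left (({0,10} : Finset (Fin 26)).sup C) hX5sub
    rw [hX1_23] at h1
    exact le_bot_iff.mp h1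
  have hX2X6 : ({1,11} : Finset (Fin 26)).sup C ⊓ ({5,15} : Finset (Fin 26)).sup C = ⊥ := by
    have h1 := inf_le_inf_left (({1,11} : Finset (Fin 26)).sup C) hX6sub
    rw [hX2_13] at h1
    exact le_bot_iff.mp h1
  have hX3X4 : ({2,12} : Finset (Fin 26)).sup C ⊓ ({3,13} : Finset (Fin 26)).sup C = ⊥ := by
    have h1 := inf_le_inf_left (({2,12} : Finset (Fin 26)).sup C) hX4sub
    rw [hX3_12] at h1
    exact le_bot_iff.mp h1
  have dX1X5 : finrank F ↥(({0,10} : Finset (Fin 26)).sup C ⊔ ({4,14} : Finset (Fin 26)).sup C)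
      = 4 * t := by rw [dimsup _ _ hX1X5, dX1, dX5]; ring
  have dX2X6 : finrank F ↥(({1,11} : Finset (Fin 26)).sup C ⊔ ({5,15} : Finset (Fin 26)).sup C)
      = 4 * t := by rw [dimsup _ _ hX2X6, dX2, dX6]; ring
  have dX3X4 : finrank F ↥(({2,12} : Finset (Fin 26)).sup C ⊔ ({3,13} : Finset (Fin 26)).sup C)
      = 4 * t := by rw [dimsup _ _ hX3X4, dX3, dX4]; ring
  -- X7 is inside X1⊔X5, X2⊔X6 and X3⊔X4
  have q1 : finrank F ↥((insert 7 (insert 17 ({0,4,6,10,14,16} : Finset (Fin 26)))).sup C)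
      = t + (t + finrank F ↥(({0,4,6,10,14,16} : Finset (Fin 26)).sup C)) := by
    rw [step 7 _ (by decide), step 17 _ (by decide)]
  have hQ1 : finrank F ↥(({0,4,6,10,14,16} : Finset (Fin 26)).sup C) ≤ 4 * t := by
    have h1 := dle (insert 7 (insert 17 ({0,4,6,10,14,16} : Finset (Fin 26))))
    omega
  have hS15 : ({0,10} : Finset (Fin 26)).sup C ⊔ ({4,14} : Finset (Fin 26)).sup C
      = ({0,4,10,14} : Finset (Fin 26)).sup C := by
    have e : ({0,10} : Finset (Fin 26)) ∪ {4,14} = {0,4,10,14} := by decide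
    rw [hU, e]
  have eQ1 : ({0,4,10,14} : Finset (Fin 26)).sup C
      = ({0,4,6,10,14,16} : Finset (Fin 26)).sup C := by
    apply Submodule.eq_of_le_of_finrank_le (Finset.sup_mono (by decide))
    rw [← hS15, dX1X5]; exact hQ1
  have hX7_15 : ({6,16} : Finset (Fin 26)).sup C
      ≤ ({0,10} : Finset (Fin 26)).sup C ⊔ ({4,14} : Finset (Fin 26)).sup C := by
    rw [hS15, eQ1]; exact Finset.sup_mono (by decide)
  have q2 : finrank F ↥((insert 8 (insert 18 ({1,5,6,11,15,16} : Finset (Fin 26)))).sup C)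
      = t + (t + finrank F ↥(({1,5,6,11,15,16} : Finset (Fin 26)).sup C)) := by
    rw [step 8 _ (by decide), step 18 _ (by decide)]
  have hQ2 : finrank F ↥(({1,5,6,11,15,16} : Finset (Fin 26)).sup C) ≤ 4 * t := by
    have h1 := dle (insert 8 (insert 18 ({1,5,6,11,15,16} : Finset (Fin 26))))
    omega
  have hS26 : ({1,11} : Finset (Fin 26)).sup C ⊔ ({5,15} : Finset (Fin 26)).sup C
      = ({1,5,11,15} : Finset (Fin 26)).sup C := by
    have e : ({1,11} : Finset (Fin 26)) ∪ {5,15} = {1,5,11,15} := by decide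
    rw [hU, e]
  have eQ2 : ({1,5,11,15} : Finset (Fin 26)).sup C
      = ({1,5,6,11,15,16} : Finset (Fin 26)).sup C := by
    apply Submodule.eq_of_le_of_finrank_le (Finset.sup_mono (by decide))
    rw [← hS26, dX2X6]; exact hQ2
  have hX7_26 : ({6,16} : Finset (Fin 26)).sup C
      ≤ ({1,11} : Finset (Fin 26)).sup C ⊔ ({5,15} : Finset (Fin 26)).sup C := by
    rw [hS26, eQ2]; exact Finset.sup_mono (by decide)
  have q3 : finrank F ↥((insert 9 (insert 19 ({2,3,6,12,13,16} : Finset (Fin 26)))).sup C)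
      = t + (t + finrank F ↥(({2,3,6,12,13,16} : Finset (Fin 26)).sup C)) := by
    rw [step 9 _ (by decide), step 19 _ (by decide)]
  have hQ3 : finrank F ↥(({2,3,6,12,13,16} : Finset (Fin 26)).sup C) ≤ 4 * t := by
    have h1 := dle (insert 9 (insert 19 ({2,3,6,12,13,16} : Finset (Fin 26))))
    omega
  have hS34 : ({2,12} : Finset (Fin 26)).sup C ⊔ ({3,13} : Finset (Fin 26)).sup C
      = ({2,3,12,13} : Finset (Fin 26)).sup C := by
    have e : ({2,12} : Finset (Fin 26)) ∪ {3,13} = {2,3,12,13} := by decide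
    rw [hU, e]
  have eQ3 : ({2,3,12,13} : Finset (Fin 26)).sup C
      = ({2,3,6,12,13,16} : Finset (Fin 26)).sup C := by
    apply Submodule.eq_of_le_of_finrank_le (Finset.sup_mono (by decide))
    rw [← hS34, dX3X4]; exact hQ3
  have hX7_34 : ({6,16} : Finset (Fin 26)).sup C
      ≤ ({2,12} : Finset (Fin 26)).sup C ⊔ ({3,13} : Finset (Fin 26)).sup C := by
    rw [hS34, eQ3]; exact Finset.sup_mono (by decide)
  -- X7 ⊓ X3 = ⊥
  have hX7X3 : ({6,16} : Finset (Fin 26)).sup C ⊓ ({2,12} : Finset (Fin 26)).sup C = ⊥ := by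
    rw [eq_bot_iff]
    intro v hv
    rw [Submodule.mem_inf] at hv
    obtain ⟨hv7, hv3⟩ := hv
    obtain ⟨a, ha, s, hs, has⟩ := Submodule.mem_sup.mp (hX7_15 hv7)
    have hs23 : s ∈ ({1,11} : Finset (Fin 26)).sup C ⊔ ({2,12} : Finset (Fin 26)).sup C := by
      rw [hU, e1122]; exact hX5sub hs
    obtain ⟨b, hb, c, hc, hbc⟩ := Submodule.mem_sup.mp hs23
    have hsum : a + b + c = v := by rw [add_assoc, hbc]; exact has
    have h0 : a + b + (c - v) = 0 := by rw [← hsum]; abel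
    obtain ⟨ha0, hb0, hcv⟩ := uniq a b (c - v) ha hb (Submodule.sub_mem _ hc hv3) h0
    have hvs : v = s := by rw [← has, ha0, zero_add]
    have hmem : v ∈ ({4,14} : Finset (Fin 26)).sup C ⊓ ({2,12} : Finset (Fin 26)).sup C :=
      ⟨by rw [hvs]; exact hs, hv3⟩
    rw [hX5X3] at hmem
    exact hmem
  -- X3 ⊔ X7 = X3 ⊔ X4 , hence X4 ≤ X3 ⊔ X7 (and X7 connects things up)
  have hX3X7 : ({2,12} : Finset (Fin 26)).sup C ⊓ ({6,16} : Finset (Fin 26)).sup C = ⊥ := by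
    rw [inf_comm]; exact hX7X3
  have dX3X7 : finrank F ↥(({2,12} : Finset (Fin 26)).sup C ⊔ ({6,16} : Finset (Fin 26)).sup C)
      = 4 * t := by rw [dimsup _ _ hX3X7, dX3, dX7]; ring
  have e37 : ({2,12} : Finset (Fin 26)).sup C ⊔ ({6,16} : Finset (Fin 26)).sup C
      = ({2,12} : Finset (Fin 26)).sup C ⊔ ({3,13} : Finset (Fin 26)).sup C := by
    apply Submodule.eq_of_le_of_finrank_le (sup_le le_sup_left hX7_34)
    rw [dX3X7, dX3X4]
  have hX4_37 : ({3,13} : Finset (Fin 26)).sup C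
      ≤ ({2,12} : Finset (Fin 26)).sup C ⊔ ({6,16} : Finset (Fin 26)).sup C := by
    rw [e37]; exact le_sup_right
  -- the characteristic-two argument : X4 ≤ X5 ⊔ X6
  have e0022 : ({0,10} : Finset (Fin 26)) ∪ {2,12} = {0,2,10,12} := by decide
  have e0011 : ({0,10} : Finset (Fin 26)) ∪ {1,11} = {0,1,10,11} := by decide
  have eY : ({4,14} : Finset (Fin 26)) ∪ {5,15} = {4,5,14,15} := by decide
  have hX4Y : ({3,13} : Finset (Fin 26)).sup C ≤ ({4,5,14,15} : Finset (Fin 26)).sup C := by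
    intro v hv
    obtain ⟨z, hz, w, hw, hzw⟩ := Submodule.mem_sup.mp (hX4_37 hv)
    obtain ⟨a, ha, s, hs, has⟩ := Submodule.mem_sup.mp (hX7_15 hw)
    have hs23 : s ∈ ({1,11} : Finset (Fin 26)).sup C ⊔ ({2,12} : Finset (Fin 26)).sup C := by
      rw [hU, e1122]; exact hX5sub hs
    obtain ⟨b, hb, c, hc, hbc⟩ := Submodule.mem_sup.mp hs23
    obtain ⟨b2, hb2, u, hu, hbu⟩ := Submodule.mem_sup.mp (hX7_26 hw)
    have hu13 : u ∈ ({0,10} : Finset (Fin 26)).sup C ⊔ ({2,12} : Finset (Fin 26)).sup C := by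
      rw [hU, e0022]; exact hX6sub hu
    obtain ⟨a2, ha2, c2, hc2, hac⟩ := Submodule.mem_sup.mp hu13
    have hw1 : a + b + c = w := by rw [add_assoc, hbc]; exact has
    have hw2 : a2 + b2 + c2 = w := by rw [← hbu, ← hac]; abel
    have h0 : (a - a2) + (b - b2) + (c - c2) = 0 := by
      have h := hw1.trans hw2.symm
      linear_combination h
    obtain ⟨haa, hbb, hcc⟩ := uniq _ _ _ (Submodule.sub_mem _ ha ha2)
      (Submodule.sub_mem _ hb hb2) (Submodule.sub_mem _ hc hc2) h0
    have hv12 : v ∈ ({0,10} : Finset (Fin 26)).sup C ⊔ ({1,11} : Finset (Fin 26)).sup C := by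
      rw [hU, e0011]; exact hX4sub hv
    obtain ⟨a3, ha3, b3, hb3, hab3⟩ := Submodule.mem_sup.mp hv12
    have hv' : a + b + (c + z) = v := by rw [← hzw, ← hw1]; abel
    have h0' : (a3 - a) + (b3 - b) + (-(c + z)) = 0 := by
      linear_combination hab3 - hv'
    obtain ⟨ha3a, hb3b, hcz⟩ := uniq _ _ _ (Submodule.sub_mem _ ha3 ha)
      (Submodule.sub_mem _ hb3 hb) (Submodule.neg_mem _ (Submodule.add_mem _ hc hz)) h0'
    have ha2a : a2 = a := (sub_eq_zero.mp haa).symm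
    have hc2c : c2 = c := (sub_eq_zero.mp hcc).symm
    have ha3a' : a3 = a := sub_eq_zero.mp ha3a
    have hb3b' : b3 = b := sub_eq_zero.mp hb3b
    have hvab : v = a + b := by rw [← hab3, ha3a', hb3b']
    have hsu : s + u = v := by
      rw [← hbc, ← hac, ha2a, hc2c, hvab]
      have h2 := char2 c
      linear_combination h2
    have hmem : v ∈ ({4,14} : Finset (Fin 26)).sup C ⊔ ({5,15} : Finset (Fin 26)).sup C := by
      rw [← hsu]
      exact Submodule.add_mem_sup hs hu
    rw [hU, eY] at hmem
    exact hmem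
  -- final contradiction with the decoding condition of user 4 (index 3)
  have hfin := peel_aux C (I2interf 3) 3 (hC 3) (hd 3)
    (L := ({4,5,14,15} : Finset (Fin 26))) (by decide)
  have hC3 : C 3 ≤ ({3,13} : Finset (Fin 26)).sup C :=
    Finset.le_sup (by decide)
  have hCY : C 3 ⊔ ({4,5,14,15} : Finset (Fin 26)).sup C
      = ({4,5,14,15} : Finset (Fin 26)).sup C :=
    sup_eq_right.mpr (le_trans hC3 hX4Y)
  rw [hCY] at hfin
  omega

theorem stmt13 {F : Type} [Field F] (hF : ringChar F = 2) (t r : ℕ) (ht : 0 < t) (hr : 0 < r)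
    (H : Fin 26 → Matrix (Fin r) (Fin t) F)
    (hdec : ∀ i : Fin 26,
      blockRank H (insert i (I2interf i)) = blockRank H (I2interf i) + t) :
    6 * t < r := by
  refine I2aux hF t r ht (fun i => LinearMap.range (H i).mulVecLin) ?_ ?_
  · intro i
    have h1 := (H i).rank_le_card_width
    rw [Fintype.card_fin] at h1
    exact h1
  · intro i
    have h1 := hdec i
    rw [blockRank_eq_finrank_sup, blockRank_eq_finrank_sup, Finset.sup_insert] at h1
    exact h1
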